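/- (Minorization of the independent Metropolis–Hastings kernel) Let π and π̄ be everywhere-positive probability density functions on ℝ^d, and suppose there exists δ > 0 such that π(x)/π̄(x) ≥ δ for all x ∈ ℝ^d. Define the independent Metropolis–Hastings kernel P̄ by P̄(x, A) = ∫_A min(1, π̄(y)π(x)/(π̄(x)π(y))) π(y) dy + 1_A(x) · (1 − ∫_{ℝ^d} min(1, π̄(z)π(x)/(π̄(x)π(z))) π(z) dz). Then for every x ∈ ℝ^d and every measurable A ⊆ ℝ^d, P̄(x, A) ≥ δ ∫_A π̄(y) dy. -/
import Mathlib


open Real MeasureTheory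

/-- Minorization of the independent Metropolis–Hastings kernel: if `π` and `π̄` are
everywhere-positive probability densities on `ℝ^d` with `π(x)/π̄(x) ≥ δ > 0` for all `x`,
then the IMH kernel
`P̄(x, A) = ∫_A min(1, π̄(y)π(x)/(π̄(x)π(y))) π(y) dy
          + 1_A(x)·(1 − ∫ min(1, π̄(z)π(x)/(π̄(x)π(z))) π(z) dz)`
satisfies `P̄(x, A) ≥ δ ∫_A π̄(y) dy` for every `x` and every measurable `A`. -/
theorem stmt7 {d : ℕ} (hd : 1 ≤ d) (p pb : EuclideanSpace ℝ (Fin d) → ℝ)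
    (hpmeas : Measurable p) (hpbmeas : Measurable pb)
    (hppos : ∀ x, 0 < p x) (hpbpos : ∀ x, 0 < pb x)
    (hpint : ∫ x : EuclideanSpace ℝ (Fin d), p x = 1)
    (hpbint : ∫ x : EuclideanSpace ℝ (Fin d), pb x = 1)
    (δ : ℝ) (hδ : 0 < δ) (hratio : ∀ x, δ ≤ p x / pb x)
    (x : EuclideanSpace ℝ (Fin d)) (A : Set (EuclideanSpace ℝ (Fin d)))
    (hA : MeasurableSet A) :
    (∫ y in A, min 1 (pb y * p x / (pb x * p y)) * p y) +
      A.indicator (fun _ => (1 : ℝ)) x *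
        (1 - ∫ z : EuclideanSpace ℝ (Fin d), min 1 (pb z * p x / (pb x * p z)) * p z)
      ≥ δ * ∫ y in A, pb y := by
  set f : EuclideanSpace ℝ (Fin d) → ℝ :=
    fun y => min 1 (pb y * p x / (pb x * p y)) * p y with hf
  -- p and pb are integrable
  have hpInt : Integrable p (volume : Measure (EuclideanSpace ℝ (Fin d))) := by
    by_contra h
    rw [integral_undef h] at hpint
    norm_num at hpint
  have hpbInt : Integrable pb (volume : Measure (EuclideanSpace ℝ (Fin d))) := by
    by_contra h
    rw [integral_undef h] at hpbint
    norm_num at hpbint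
  -- pointwise bounds on f
  have hfpos : ∀ y, 0 ≤ f y := by
    intro y
    apply mul_nonneg _ (hppos y).le
    refine le_min zero_le_one ?_
    have h1 := (hpbpos y).le
    have h2 := (hppos x).le
    have h3 := mul_pos (hpbpos x) (hppos y)
    positivity
  have hfle : ∀ y, f y ≤ p y := by
    intro y
    calc f y ≤ 1 * p y := by
          exact mul_le_mul_of_nonneg_right (min_le_left _ _) (hppos y).le
      _ = p y := one_mul _
  have hflb : ∀ y, δ * pb y ≤ f y := by
    intro y
    rcases le_total 1 (pb y * p x / (pb x * p y)) with h | h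
    · rw [hf]
      simp only [min_eq_left h, one_mul]
      exact (le_div_iff₀ (hpbpos y)).mp (hratio y)
    · rw [hf]
      simp only [min_eq_right h]
      have : pb y * p x / (pb x * p y) * p y = pb y * (p x / pb x) := by
        rw [div_mul_eq_mul_div, mul_comm (pb x) (p y)]
        rw [show pb y * p x * p y = p y * (pb y * p x) by ring,
          show p y * pb x = p y * pb x from rfl,
          mul_div_mul_left _ _ (hppos y).ne', mul_div_assoc]
      rw [this]
      have := mul_le_mul_of_nonneg_left (hratio x) (hpbpos y).le
      linarith
  have hfmeas : Measurable f := by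
    apply Measurable.mul _ hpmeas
    exact (measurable_const.min ((hpbmeas.mul measurable_const).div
      (measurable_const.mul hpmeas)))
  have hfInt : Integrable f (volume : Measure (EuclideanSpace ℝ (Fin d))) := by
    refine hpInt.mono' hfmeas.aestronglyMeasurable ?_
    filter_upwards with y
    rw [Real.norm_eq_abs, abs_of_nonneg (hfpos y)]
    exact hfle y
  -- the integral of f over A dominates δ ∫_A pb
  have h1 : δ * ∫ y in A, pb y ≤ ∫ y in A, f y := by
    rw [← integral_const_mul]
    apply setIntegral_mono_on
    · exact (hpbInt.const_mul δ).integrableOn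
    · exact hfInt.integrableOn
    · exact hA
    · intro y _
      exact hflb y
  -- the rejection term is nonnegative
  have h2 : 0 ≤ A.indicator (fun _ => (1 : ℝ)) x *
      (1 - ∫ z : EuclideanSpace ℝ (Fin d), f z) := by
    apply mul_nonneg
    · exact Set.indicator_nonneg (fun _ _ => zero_le_one) x
    · have : ∫ z, f z ≤ ∫ z, p z := integral_mono hfInt hpInt hfle
      rw [hpint] at this
      linarith
  linarith
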